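/- Let x, y, z be left I-states of size k with x and y not too far. Then the following two conditions are equivalent: (a) max(h_i^x, h_i^y) ≤ h_i^z < min(h_{i+1}^x, h_{i+1}^y) for all 1 ≤ i ≤ n−k; (b) z is not too far from x, z is not too far from y, and z_i ≤ x_i and z_i ≤ y_i for all 1 ≤ i ≤ k. (Condition (b) is the condition x ⪯ z ⪰ y with z pairwise not too far from x and y appearing in the definition of fork elements, and condition (a) says the corresponding fork diagram is oriented.) -/

import Mathlib

/-- The `i`-th smallest element (0-indexed) of a finite set of natural numbers. -/
def nthElt (s : Finset ℕ) (i : ℕ) : ℕ := (s.sort (· ≤ ·)).getD i 0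

/-- The hole set of an I-state: the complement `{0, …, n} \ s`. -/
def holes (n : ℕ) (s : Finset ℕ) : Finset ℕ := Finset.range (n + 1) \ s

/-- The `i`-th hole (0-indexed): `hnth n s i` is `h_{i+1}^s` in 1-indexed notation. -/
def hnth (n : ℕ) (s : Finset ℕ) (i : ℕ) : ℕ := nthElt (holes n s) i

/-- Two I-states of size `k` are too far if `|x_i − y_i| > 1` for some `i`. -/
def TooFar (k : ℕ) (x y : Finset ℕ) : Prop :=
  ∃ i < k, 1 < ((nthElt x i : ℤ) - (nthElt y i : ℤ)).natAbs

/-- number of elements of `s` below `t` -/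
def cnt (s : Finset ℕ) (t : ℕ) : ℕ := (Finset.range t ∩ s).card

lemma cnt_le_card (s : Finset ℕ) (t : ℕ) : cnt s t ≤ s.card :=
  Finset.card_le_card (Finset.inter_subset_right)

lemma cnt_le (s : Finset ℕ) (t : ℕ) : cnt s t ≤ t := by
  simpa [cnt] using Finset.card_le_card (s := Finset.range t ∩ s) Finset.inter_subset_left

lemma cnt_of_le {s : Finset ℕ} {n : ℕ} (hs : s ⊆ Finset.range n) {t : ℕ} (h : n ≤ t) :
    cnt s t = s.card := by
  unfold cnt
  congr 1
  apply Finset.inter_eq_right.2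
  exact hs.trans (Finset.range_subset_range.2 h)

lemma list_cnt (l : List ℕ) (hl : List.Pairwise (· < ·) l) (j : ℕ) (hj : j < l.length) (t : ℕ) :
    (l.getD j 0 < t ↔ j < l.countP (fun a => a < t)) := by
  induction l generalizing j with
  | nil => simp at hj
  | cons a l ih =>
    have ha : ∀ b ∈ l, a < b := fun b hb => (List.pairwise_cons.1 hl).1 b hb
    have hl' : List.Pairwise (· < ·) l := (List.pairwise_cons.1 hl).2
    have hzero : ¬ a < t → l.countP (fun a => a < t) = 0 := by
      intro hat
      apply List.countP_eq_zero.2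
      intro b hb
      simp only [decide_eq_true_eq]
      have := ha b hb
      omega
    cases j with
    | zero =>
      simp only [List.getD_cons_zero, List.countP_cons]
      by_cases hat : a < t
      · simp [hat]
      · have := hzero hat
        simp [hat, this]
    | succ j =>
      simp only [List.getD_cons_succ, List.countP_cons]
      have hj' : j < l.length := by simpa using hj
      by_cases hat : a < t
      · rw [ih hl' j hj']
        simp [hat]
      · have h0 := hzero hat
        have : a ≤ l.getD j 0 := by
          rw [List.getD_eq_getElem l 0 hj']
          exact le_of_lt (ha _ (List.getElem_mem hj'))
        simp only [hat]
        constructor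
        · intro h; omega
        · intro h; simp [h0] at h

lemma countP_sort (s : Finset ℕ) (t : ℕ) :
    (s.sort (· ≤ ·)).countP (fun a => a < t) = cnt s t := by
  have h1 : (s.sort (· ≤ ·)).countP (fun a => a < t)
      = Multiset.countP (fun a => a < t) ((s.sort (· ≤ ·) : List ℕ) : Multiset ℕ) := rfl
  rw [h1, Finset.sort_eq, Multiset.countP_eq_card_filter]
  have : Finset.range t ∩ s = s.filter (fun a => a < t) := by
    ext a
    simp [Finset.mem_inter, Finset.mem_filter, Finset.mem_range, and_comm]
  unfold cnt
  rw [this]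
  rfl

/-- key correspondence: `nthElt s j < t ↔ j < cnt s t`. -/
lemma nthElt_lt_iff {s : Finset ℕ} {j : ℕ} (hj : j < s.card) (t : ℕ) :
    nthElt s j < t ↔ j < cnt s t := by
  rw [nthElt, ← countP_sort s t]
  exact list_cnt _ (Finset.sortedLT_sort s).pairwise j (by rwa [Finset.length_sort]) t

lemma nthElt_mem {s : Finset ℕ} {j : ℕ} (hj : j < s.card) : nthElt s j ∈ s := by
  unfold nthElt
  have hj' : j < (s.sort (· ≤ ·)).length := by rwa [Finset.length_sort]
  rw [List.getD_eq_getElem _ 0 hj']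
  exact (Finset.mem_sort _).1 (List.getElem_mem hj')

lemma holes_subset (n : ℕ) (s : Finset ℕ) : holes n s ⊆ Finset.range (n + 1) :=
  Finset.sdiff_subset

lemma card_holes {n k : ℕ} {s : Finset ℕ} (hs : s ⊆ Finset.range n) (hsk : s.card = k) :
    (holes n s).card = n + 1 - k := by
  unfold holes
  rw [Finset.card_sdiff_of_subset (hs.trans (Finset.range_subset_range.2 (Nat.le_succ n)))]
  simp [hsk]

lemma cnt_add_cnt_holes {n : ℕ} {s : Finset ℕ} (hs : s ⊆ Finset.range n) {t : ℕ}
    (ht : t ≤ n + 1) : cnt s t + cnt (holes n s) t = t := by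
  unfold cnt holes
  have h1 : Finset.range t ∩ (Finset.range (n + 1) \ s)
      = Finset.range t \ (Finset.range t ∩ s) := by
    ext a
    simp only [Finset.mem_inter, Finset.mem_sdiff, Finset.mem_range]
    constructor
    · rintro ⟨h1, h2, h3⟩; exact ⟨h1, fun h => h3 h.2⟩
    · rintro ⟨h1, h2⟩; exact ⟨h1, by omega, fun h => h2 ⟨h1, h⟩⟩
  rw [h1]
  have := Finset.card_inter_add_card_sdiff (Finset.range t) (Finset.range t ∩ s)
  rw [← Finset.inter_assoc, Finset.inter_self] at this
  rw [Finset.card_range] at this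
  omega

lemma mem_holes_self {n : ℕ} {s : Finset ℕ} (hs : s ⊆ Finset.range n) : n ∈ holes n s := by
  unfold holes
  simp only [Finset.mem_sdiff, Finset.mem_range]
  exact ⟨Nat.lt_succ_self n, fun h => by simpa using Finset.mem_range.1 (hs h)⟩

lemma cnt_holes_le {n k : ℕ} {s : Finset ℕ} (hs : s ⊆ Finset.range n) (hsk : s.card = k)
    {t : ℕ} (ht : t ≤ n) : cnt (holes n s) t ≤ n - k := by
  have hsub : Finset.range t ∩ holes n s ⊆ (holes n s).erase n := by
    intro a ha
    simp only [Finset.mem_inter, Finset.mem_range] at ha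
    exact Finset.mem_erase.2 ⟨by omega, ha.2⟩
  have := Finset.card_le_card hsub
  rw [Finset.card_erase_of_mem (mem_holes_self hs), card_holes hs hsk] at this
  unfold cnt
  have hkn : k ≤ n := by
    rw [← hsk, ← Finset.card_range n]; exact Finset.card_le_card hs
  omega

lemma E1 {k : ℕ} {x z : Finset ℕ} (hxk : x.card = k) (hzk : z.card = k) :
    (∀ j < k, nthElt z j ≤ nthElt x j) ↔ (∀ t, cnt x t ≤ cnt z t) := by
  constructor
  · intro h t
    by_contra hc
    push_neg at hc
    have hk1 : cnt x t ≤ k := (cnt_le_card x t).trans_eq hxk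
    set j := cnt z t with hj
    have hjx : j < x.card := by omega
    have hjz : j < z.card := by omega
    have hxlt : nthElt x j < t := (nthElt_lt_iff hjx t).2 (by omega)
    have hzge : ¬ nthElt z j < t := by rw [nthElt_lt_iff hjz t]; omega
    have := h j (by omega)
    omega
  · intro h j hj
    have h1 : nthElt x j < nthElt x j + 1 := Nat.lt_succ_self _
    rw [nthElt_lt_iff (by omega : j < x.card)] at h1
    have h2 : j < cnt z (nthElt x j + 1) := lt_of_lt_of_le h1 (h _)
    rw [← nthElt_lt_iff (by omega : j < z.card)] at h2
    omega

lemma E2 {k : ℕ} {x z : Finset ℕ} (hxk : x.card = k) (hzk : z.card = k) :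
    (∀ j < k, nthElt x j ≤ nthElt z j + 1) ↔ (∀ t, cnt z t ≤ cnt x (t + 1)) := by
  constructor
  · intro h t
    by_contra hc
    push_neg at hc
    have hk1 : cnt z t ≤ k := (cnt_le_card z t).trans_eq hzk
    set j := cnt x (t + 1) with hj
    have hjz : j < z.card := by omega
    have hjx : j < x.card := by omega
    have hzlt : nthElt z j < t := (nthElt_lt_iff hjz t).2 (by omega)
    have hxge : ¬ nthElt x j < t + 1 := by rw [nthElt_lt_iff hjx (t + 1)]; omega
    have := h j (by omega)
    omega
  · intro h j hj
    have h1 : nthElt z j < nthElt z j + 1 := Nat.lt_succ_self _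
    rw [nthElt_lt_iff (by omega : j < z.card)] at h1
    have h2 : j < cnt x (nthElt z j + 2) := lt_of_lt_of_le h1 (h _)
    rw [← nthElt_lt_iff (by omega : j < x.card)] at h2
    omega

lemma hnth_lt_iff {n : ℕ} {s : Finset ℕ} {i : ℕ} (hi : i < (holes n s).card) (t : ℕ) :
    hnth n s i < t ↔ i < cnt (holes n s) t := nthElt_lt_iff hi t

lemma hnth_le_n {n : ℕ} {s : Finset ℕ} {i : ℕ} (hi : i < (holes n s).card) :
    hnth n s i ≤ n := by
  have := holes_subset n s (nthElt_mem hi)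
  have := Finset.mem_range.1 this
  rw [hnth]
  omega

lemma E3 {n k : ℕ} {x z : Finset ℕ} (hx : x ⊆ Finset.range n) (hz : z ⊆ Finset.range n)
    (hxk : x.card = k) (hzk : z.card = k) :
    (∀ i < n - k, hnth n x i ≤ hnth n z i) ↔ (∀ t, cnt x t ≤ cnt z t) := by
  have hkn : k ≤ n := by
    rw [← hxk, ← Finset.card_range n]; exact Finset.card_le_card hx
  have hcx : (holes n x).card = n + 1 - k := card_holes hx hxk
  have hcz : (holes n z).card = n + 1 - k := card_holes hz hzk
  constructor
  · intro h t
    rcases le_or_gt n t with hnt | hnt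
    · rw [cnt_of_le hx hnt, cnt_of_le hz hnt, hxk, hzk]
    · by_contra hc
      push_neg at hc
      have ht : t ≤ n := by omega
      have ha1 := cnt_add_cnt_holes hx (by omega : t ≤ n + 1)
      have ha2 := cnt_add_cnt_holes hz (by omega : t ≤ n + 1)
      have hcxt : cnt x t ≤ t := cnt_le x t
      set i := cnt (holes n x) t with hi
      have hile : cnt (holes n z) t ≤ n - k := cnt_holes_le hz hzk ht
      have hiz : i < (holes n z).card := by omega
      have hix : i < (holes n x).card := by omega
      have hzlt : hnth n z i < t := (hnth_lt_iff hiz t).2 (by omega)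
      have hxge : ¬ hnth n x i < t := by rw [hnth_lt_iff hix t]; omega
      have := h i (by omega)
      omega
  · intro h i hi
    by_contra hc
    push_neg at hc
    set t := hnth n x i with ht
    have hix : i < (holes n x).card := by omega
    have hiz : i < (holes n z).card := by omega
    have htn : t ≤ n := hnth_le_n hix
    have ha1 := cnt_add_cnt_holes hx (by omega : t ≤ n + 1)
    have ha2 := cnt_add_cnt_holes hz (by omega : t ≤ n + 1)
    have h1 : i < cnt (holes n z) t := by rw [← hnth_lt_iff hiz t]; exact hc
    have h2 : ¬ i < cnt (holes n x) t := by
      rw [← hnth_lt_iff hix t]; omega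
    have := h t
    omega

lemma E4 {n k : ℕ} {x z : Finset ℕ} (hx : x ⊆ Finset.range n) (hz : z ⊆ Finset.range n)
    (hxk : x.card = k) (hzk : z.card = k) :
    (∀ i < n - k, hnth n z i < hnth n x (i + 1)) ↔ (∀ t, cnt z t ≤ cnt x (t + 1)) := by
  have hkn : k ≤ n := by
    rw [← hxk, ← Finset.card_range n]; exact Finset.card_le_card hx
  have hcx : (holes n x).card = n + 1 - k := card_holes hx hxk
  have hcz : (holes n z).card = n + 1 - k := card_holes hz hzk
  constructor
  · intro h t
    rcases le_or_gt n t with hnt | hnt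
    · rw [cnt_of_le hx (by omega), cnt_of_le hz hnt, hxk, hzk]
    · by_contra hc
      push_neg at hc
      have ht : t ≤ n := by omega
      have ha1 := cnt_add_cnt_holes hx (by omega : t + 1 ≤ n + 1)
      have ha2 := cnt_add_cnt_holes hz (by omega : t ≤ n + 1)
      have hczt : cnt z t ≤ t := cnt_le z t
      have hcx1 : cnt (holes n x) (t + 1) ≤ (holes n x).card := cnt_le_card _ _
      set i := cnt (holes n z) t with hi
      have hcnt : i + 2 ≤ cnt (holes n x) (t + 1) := by omega
      have hix : i + 1 < (holes n x).card := by omega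
      have hiz : i < (holes n z).card := by omega
      have hxlt : hnth n x (i + 1) < t + 1 := (hnth_lt_iff hix (t + 1)).2 (by omega)
      have hzge : ¬ hnth n z i < t := by rw [hnth_lt_iff hiz t]; omega
      have := h i (by omega)
      omega
  · intro h i hi
    by_contra hc
    push_neg at hc
    set t := hnth n z i with ht
    have hiz : i < (holes n z).card := by omega
    have hix : i + 1 < (holes n x).card := by omega
    have htn : t ≤ n := hnth_le_n hiz
    have ha1 := cnt_add_cnt_holes hx (by omega : t + 1 ≤ n + 1)
    have ha2 := cnt_add_cnt_holes hz (by omega : t ≤ n + 1)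
    have h1 : i + 1 < cnt (holes n x) (t + 1) := by
      rw [← hnth_lt_iff hix (t + 1)]; omega
    have h2 : ¬ i < cnt (holes n z) t := by
      rw [← hnth_lt_iff hiz t]; omega
    have := h t
    omega

lemma pairwise_iff {n k : ℕ} {x z : Finset ℕ} (hx : x ⊆ Finset.range n)
    (hz : z ⊆ Finset.range n) (hxk : x.card = k) (hzk : z.card = k) :
    (∀ i < n - k, hnth n x i ≤ hnth n z i ∧ hnth n z i < hnth n x (i + 1)) ↔
    (∀ j < k, nthElt z j ≤ nthElt x j ∧ nthElt x j ≤ nthElt z j + 1) := by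
  constructor
  · intro h j hj
    have c1 := (E3 hx hz hxk hzk).1 (fun i hi => (h i hi).1)
    have c2 := (E4 hx hz hxk hzk).1 (fun i hi => (h i hi).2)
    exact ⟨(E1 hxk hzk).2 c1 j hj, (E2 hxk hzk).2 c2 j hj⟩
  · intro h i hi
    have c1 := (E1 hxk hzk).1 (fun j hj => (h j hj).1)
    have c2 := (E2 hxk hzk).1 (fun j hj => (h j hj).2)
    exact ⟨(E3 hx hz hxk hzk).2 c1 i hi, (E4 hx hz hxk hzk).2 c2 i hi⟩

/-- For left I-states `x, y, z` of size `k` with `x, y` not too far, the following are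
equivalent: (a) `max(h_i^x, h_i^y) ≤ h_i^z < min(h_{i+1}^x, h_{i+1}^y)` for all
`1 ≤ i ≤ n − k`; (b) `z` is not too far from `x` and from `y`, and `z_i ≤ x_i` and
`z_i ≤ y_i` for all `1 ≤ i ≤ k` (i.e. `x ⪯ z ⪰ y`). -/
theorem oriented_iff_not_too_far_and_le (n k : ℕ) (hkn : k ≤ n) (x y z : Finset ℕ)
    (hx : x ⊆ Finset.range n) (hy : y ⊆ Finset.range n) (hz : z ⊆ Finset.range n)
    (hxk : x.card = k) (hyk : y.card = k) (hzk : z.card = k)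
    (hfar : ¬ TooFar k x y) :
    (∀ i < n - k, max (hnth n x i) (hnth n y i) ≤ hnth n z i ∧
        hnth n z i < min (hnth n x (i + 1)) (hnth n y (i + 1))) ↔
    (¬ TooFar k z x ∧ ¬ TooFar k z y ∧
      ∀ i < k, nthElt z i ≤ nthElt x i ∧ nthElt z i ≤ nthElt y i) := by
  have P1 := pairwise_iff hx hz hxk hzk
  have P2 := pairwise_iff hy hz hyk hzk
  constructor
  · intro h
    have hx' := P1.1 (fun i hi =>
      ⟨le_trans (le_max_left _ _) (h i hi).1, lt_of_lt_of_le (h i hi).2 (min_le_left _ _)⟩)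
    have hy' := P2.1 (fun i hi =>
      ⟨le_trans (le_max_right _ _) (h i hi).1, lt_of_lt_of_le (h i hi).2 (min_le_right _ _)⟩)
    refine ⟨?_, ?_, fun i hi => ⟨(hx' i hi).1, (hy' i hi).1⟩⟩
    · rintro ⟨i, hi, habs⟩
      have := hx' i hi
      omega
    · rintro ⟨i, hi, habs⟩
      have := hy' i hi
      omega
  · rintro ⟨h1, h2, h3⟩
    rw [TooFar] at h1 h2
    push_neg at h1 h2
    have hxz := P1.2 (fun j hj => ⟨(h3 j hj).1, by have := h1 j hj; have := (h3 j hj).1; omega⟩)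
    have hyz := P2.2 (fun j hj => ⟨(h3 j hj).2, by have := h2 j hj; have := (h3 j hj).2; omega⟩)
    exact fun i hi => ⟨max_le (hxz i hi).1 (hyz i hi).1, lt_min (hxz i hi).2 (hyz i hi).2⟩
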